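/- Let b ∈ ℝ^d, let a ∈ ℝ^d be k-sparse (‖a‖₀ ≤ k), and set k̄ = ‖a‖₀. Let b_k denote a vector obtained from b by keeping k entries of largest absolute value and setting all other entries to 0. Then ‖b_k − a‖ ≤ γ‖b − a‖, where γ = √(1 + (k̄/k + √((4 + k̄/k)·k̄/k))/2). -/
import Mathlib


noncomputable section

open Classical in
/-- number of nonzero entries (the "ℓ₀ norm") -/
def sparsity {d : ℕ} (v : EuclideanSpace ℝ (Fin d)) : ℕ :=
  (Finset.univ.filter fun i => v i ≠ 0).card

/-- `w` is a hard thresholding of `z`: keep `k` entries of largest magnitude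
(ties broken arbitrarily) and set all other entries to 0. -/
def IsHT {d : ℕ} (k : ℕ) (z w : EuclideanSpace ℝ (Fin d)) : Prop :=
  ∃ T : Finset (Fin d), T.card = k ∧ (∀ i, w i = if i ∈ T then z i else 0) ∧
    ∀ i ∈ T, ∀ j ∉ T, |z j| ≤ |z i|

/-- `γ = √(1 + (k̄/k + √((4 + k̄/k)·k̄/k))/2)` -/
def htGamma (k kbar : ℕ) : ℝ :=
  Real.sqrt (1 + ((kbar : ℝ) / k +
    Real.sqrt ((4 + (kbar : ℝ) / k) * ((kbar : ℝ) / k))) / 2)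

lemma htGamma_eq (k kbar : ℕ) :
    htGamma k kbar = Real.sqrt (1 + ((kbar : ℝ) / k +
      Real.sqrt ((4 + (kbar : ℝ) / k) * ((kbar : ℝ) / k))) / 2) := rfl

lemma htGamma_one_le (k kbar : ℕ) : 1 ≤ htGamma k kbar := by
  have h1 : (0:ℝ) ≤ (kbar : ℝ) / k := by positivity
  have h2 : (0:ℝ) ≤ Real.sqrt ((4 + (kbar : ℝ) / k) * ((kbar : ℝ) / k)) := Real.sqrt_nonneg _
  calc (1:ℝ) = Real.sqrt 1 := by simp
    _ ≤ htGamma k kbar := by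
        rw [htGamma_eq]
        apply Real.sqrt_le_sqrt
        linarith

lemma ratio_step (D2 B2 sR kR kbarR : ℝ) (hD2 : 0 ≤ D2) (hB2 : 0 ≤ B2)
    (hs : 0 ≤ sR) (hsk : sR < kR) (hkbk : kbarR ≤ kR)
    (hsum : (kR - sR) * D2 ≤ (kbarR - sR) * B2) :
    D2 * kR ≤ kbarR * B2 := by
  have h1 : (kbarR - sR) * kR ≤ (kR - sR) * kbarR := by nlinarith
  have h2 : (kR - sR) * (D2 * kR) ≤ (kR - sR) * (kbarR * B2) := by nlinarith
  exact le_of_mul_le_mul_left h2 (by linarith)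

/-- key scalar inequality -/
lemma ht_scalar (ρ t A B C D : ℝ) (hρ : 0 < ρ) (ht : t * t = ρ * (1 + t))
    (htpos : 0 < t) (hA : 0 ≤ A) (hB : 0 ≤ B) (hC : 0 ≤ C) (hD : 0 ≤ D)
    (hACD : A ≤ C + D) (hD2 : D^2 ≤ ρ * B^2) :
    A^2 ≤ t * B^2 + (1 + t) * C^2 := by
  set r := Real.sqrt ρ with hr
  have hr2 : r * r = ρ := Real.mul_self_sqrt hρ.le
  have hrpos : 0 < r := Real.sqrt_pos.mpr hρ
  have hDrB : D ≤ r * B := by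
    have h1 : D^2 ≤ (r*B)^2 := by nlinarith
    have h2 := Real.sqrt_le_sqrt h1
    rwa [Real.sqrt_sq hD, Real.sqrt_sq (by positivity)] at h2
  have hA2 : A ≤ C + r * B := le_trans hACD (by linarith)
  have h1 : A^2 ≤ (C + r * B)^2 := by nlinarith
  have hid : t * (t * B^2 + (1 + t) * C^2) - t * ((C + r * B)^2) = (r * B - t * C)^2 := by
    linear_combination B^2 * ht - B^2 * (t + 1) * hr2
  have h2 : t * ((C + r * B)^2) ≤ t * (t * B^2 + (1 + t) * C^2) := by
    nlinarith [sq_nonneg (r * B - t * C)]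
  have h3 : (C + r * B)^2 ≤ t * B^2 + (1 + t) * C^2 :=
    le_of_mul_le_mul_left (by linarith) htpos
  linarith

/-- Simplified expansivity bound for the hard-thresholding operator: for a `k`-sparse `a`
with `k̄ = ‖a‖₀`, any hard thresholding `b_k` of `b` satisfies `‖b_k − a‖ ≤ γ‖b − a‖`
where `γ = √(1 + (k̄/k + √((4 + k̄/k)·k̄/k))/2)`. -/
theorem hard_thresholding_expansivity_simple {d : ℕ} (k : ℕ)
    (b a bk : EuclideanSpace ℝ (Fin d))
    (ha : sparsity a ≤ k) (hbk : IsHT k b bk) :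
    ‖bk - a‖ ≤ htGamma k (sparsity a) * ‖b - a‖ := by
  classical
  obtain ⟨T, hTcard, hbkdef, hTmax⟩ := hbk
  set S : Finset (Fin d) := Finset.univ.filter (fun i => a i ≠ 0) with hSdef
  have hScard : sparsity a = S.card := by
    unfold sparsity
    congr 1
  have hmemS : ∀ i, i ∉ S → a i = 0 := by
    intro i hi
    by_contra h
    exact hi (by simp [hSdef, h])
  clear_value S
  -- norms as sums of squares
  have hnorm : ∀ v : EuclideanSpace ℝ (Fin d), ‖v‖^2 = ∑ i, (v i)^2 := by
    intro v
    rw [EuclideanSpace.norm_eq, Real.sq_sqrt (by positivity)]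
    simp [Real.norm_eq_abs, sq_abs]
  have hsub : ∀ (v w : EuclideanSpace ℝ (Fin d)) (i : Fin d), (v - w) i = v i - w i :=
    fun _ _ _ => rfl
  set X := ∑ i ∈ T, (b i - a i)^2 with hX
  set A2 := ∑ i ∈ S \ T, (a i)^2 with hA2
  set B2 := ∑ i ∈ T \ S, (b i)^2 with hB2
  set C2 := ∑ i ∈ S \ T, (b i - a i)^2 with hC2
  set D2 := ∑ i ∈ S \ T, (b i)^2 with hD2
  clear_value X A2 B2 C2 D2
  have hXnn : 0 ≤ X := hX ▸ Finset.sum_nonneg fun i _ => sq_nonneg _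
  have hA2nn : 0 ≤ A2 := hA2 ▸ Finset.sum_nonneg fun i _ => sq_nonneg _
  have hB2nn : 0 ≤ B2 := hB2 ▸ Finset.sum_nonneg fun i _ => sq_nonneg _
  have hC2nn : 0 ≤ C2 := hC2 ▸ Finset.sum_nonneg fun i _ => sq_nonneg _
  have hD2nn : 0 ≤ D2 := hD2 ▸ Finset.sum_nonneg fun i _ => sq_nonneg _
  -- ‖bk - a‖² = X + A2
  have hnorm1 : ‖bk - a‖^2 = X + A2 := by
    rw [hnorm, hX, hA2]
    rw [← Finset.sum_add_sum_compl T]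
    congr 1
    · apply Finset.sum_congr rfl
      intro i hi
      rw [hsub, hbkdef i, if_pos hi]
    · have hTc : ∀ i ∈ Tᶜ, ((bk - a) i)^2 = (a i)^2 := by
        intro i hi
        rw [hsub, hbkdef i, if_neg (by simpa using hi)]
        ring
      have hsubset : S \ T ⊆ Tᶜ := by
        intro i hi
        simpa using (Finset.mem_sdiff.mp hi).2
      calc ∑ i ∈ Tᶜ, ((bk - a) i)^2 = ∑ i ∈ Tᶜ, (a i)^2 := Finset.sum_congr rfl hTc
        _ = ∑ i ∈ S \ T, (a i)^2 := by
            refine (Finset.sum_subset hsubset ?_).symm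
            intro i hi hi2
            have hiS : i ∉ S := by
              intro hiS
              exact hi2 (Finset.mem_sdiff.mpr ⟨hiS, by simpa using hi⟩)
            simp [hmemS i hiS]
  -- X + C2 ≤ ‖b - a‖²
  have hnorm2 : X + C2 ≤ ‖b - a‖^2 := by
    rw [hnorm, hX, hC2]
    have hdisj : Disjoint T (S \ T) := Finset.disjoint_sdiff
    calc (∑ i ∈ T, (b i - a i)^2) + ∑ i ∈ S \ T, (b i - a i)^2
        = ∑ i ∈ T ∪ (S \ T), (b i - a i)^2 := (Finset.sum_union hdisj).symm
      _ ≤ ∑ i, ((b - a) i)^2 := by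
          simp only [hsub]
          exact Finset.sum_le_sum_of_subset_of_nonneg (Finset.subset_univ _)
            (fun i _ _ => sq_nonneg _)
  -- B2 ≤ X
  have hB2X : B2 ≤ X := by
    rw [hB2, hX]
    calc ∑ i ∈ T \ S, (b i)^2 = ∑ i ∈ T \ S, (b i - a i)^2 := by
          apply Finset.sum_congr rfl
          intro i hi
          rw [hmemS i (Finset.mem_sdiff.mp hi).2]
          ring
      _ ≤ ∑ i ∈ T, (b i - a i)^2 :=
          Finset.sum_le_sum_of_subset_of_nonneg Finset.sdiff_subset
            (fun i _ _ => sq_nonneg _)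
  set kbar := sparsity a with hkbar
  set ρ : ℝ := (kbar : ℝ) / k with hρdef
  set t : ℝ := (ρ + Real.sqrt ((4 + ρ) * ρ)) / 2 with htdef
  clear_value kbar
  clear_value ρ
  clear_value t
  have hρnn : 0 ≤ ρ := by rw [hρdef]; positivity
  have htnn : 0 ≤ t := by rw [htdef]; positivity
  have hγ : htGamma k kbar = Real.sqrt (1 + t) := by
    rw [htGamma_eq, htdef, hρdef]
  -- final step: from ‖bk-a‖² ≤ (1+t)‖b-a‖² conclude
  have hfinish : ‖bk - a‖^2 ≤ (1 + t) * ‖b - a‖^2 → ‖bk - a‖ ≤ htGamma k kbar * ‖b - a‖ := by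
    intro h
    rw [hγ]
    have h2 := Real.sqrt_le_sqrt h
    rwa [Real.sqrt_sq (norm_nonneg _), Real.sqrt_mul (by linarith : (0:ℝ) ≤ 1 + t),
      Real.sqrt_sq (norm_nonneg _)] at h2
  by_cases hST : S \ T = ∅
  · -- a is entirely within T, so ‖bk - a‖ ≤ ‖b - a‖
    have hA20 : A2 = 0 := by rw [hA2, hST]; simp
    have h1 : ‖bk - a‖^2 ≤ ‖b - a‖^2 := by
      rw [hnorm1, hA20]; linarith
    have h2 : ‖bk - a‖ ≤ ‖b - a‖ := by
      nlinarith [norm_nonneg (bk - a), norm_nonneg (b - a)]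
    calc ‖bk - a‖ ≤ ‖b - a‖ := h2
      _ ≤ htGamma k kbar * ‖b - a‖ := by
          nlinarith [htGamma_one_le k kbar, norm_nonneg (b - a)]
  · -- main case
    have hSTne : (S \ T).Nonempty := Finset.nonempty_iff_ne_empty.mpr hST
    set s := (S ∩ T).card with hs
    have hcardST : (S \ T).card + s = kbar := by
      rw [hs, hScard]
      exact Finset.card_sdiff_add_card_inter S T
    have hcardTS : (T \ S).card + s = k := by
      rw [hs, Finset.inter_comm, ← hTcard]
      exact Finset.card_sdiff_add_card_inter T S
    clear_value s
    have hSTpos : 0 < (S \ T).card := Finset.card_pos.mpr hSTne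
    have hskbar : s < kbar := by omega
    have hsk : s < k := by omega
    have hkpos : 0 < k := by omega
    have hkbarpos : 0 < kbar := by omega
    have hρpos : 0 < ρ := by
      rw [hρdef]
      have h1 : (0:ℝ) < kbar := by exact_mod_cast hkbarpos
      have h2 : (0:ℝ) < k := by exact_mod_cast hkpos
      positivity
    -- each squared entry of b on S \ T is dominated by entries on T \ S
    have hentry : ∀ j ∈ S \ T, ((T \ S).card : ℝ) * (b j)^2 ≤ B2 := by
      intro j hj
      obtain ⟨hjS, hjT⟩ := Finset.mem_sdiff.mp hj
      rw [hB2]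
      calc ((T \ S).card : ℝ) * (b j)^2 = ∑ _i ∈ T \ S, (b j)^2 := by
            rw [Finset.sum_const, nsmul_eq_mul]
        _ ≤ ∑ i ∈ T \ S, (b i)^2 := by
            apply Finset.sum_le_sum
            intro i hi
            have hiT := (Finset.mem_sdiff.mp hi).1
            have habs := hTmax i hiT j hjT
            rw [← sq_abs (b j), ← sq_abs (b i)]
            exact pow_le_pow_left₀ (abs_nonneg _) habs 2
    have hD2sum : ((T \ S).card : ℝ) * D2 ≤ ((S \ T).card : ℝ) * B2 := by
      rw [hD2, Finset.mul_sum]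
      calc ∑ j ∈ S \ T, ((T \ S).card : ℝ) * (b j)^2 ≤ ∑ _j ∈ S \ T, B2 :=
            Finset.sum_le_sum hentry
        _ = ((S \ T).card : ℝ) * B2 := by rw [Finset.sum_const, nsmul_eq_mul]
    -- D2 ≤ ρ * B2
    have hD2B2 : D2 ≤ ρ * B2 := by
      have hTS : ((T \ S).card : ℝ) = (k : ℝ) - s := by
        rw [eq_sub_iff_add_eq]
        exact_mod_cast hcardTS
      have hSTc : ((S \ T).card : ℝ) = (kbar : ℝ) - s := by
        rw [eq_sub_iff_add_eq]
        exact_mod_cast hcardST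
      rw [hTS, hSTc] at hD2sum
      have hks : (0:ℝ) < (k:ℝ) - s := by
        have : (s:ℝ) < k := by exact_mod_cast hsk
        linarith
      have hkR : (0:ℝ) < (k:ℝ) := by exact_mod_cast hkpos
      have hsnn : (0:ℝ) ≤ s := by positivity
      have hkbk : (kbar : ℝ) ≤ k := by exact_mod_cast ha
      rw [hρdef, div_mul_eq_mul_div, le_div_iff₀ hkR]
      exact ratio_step D2 B2 s k kbar hD2nn hB2nn hsnn (by exact_mod_cast hsk) hkbk hD2sum
    -- properties of t
    have hq2 : Real.sqrt ((4 + ρ) * ρ) ^ 2 = (4 + ρ) * ρ :=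
      Real.sq_sqrt (by positivity)
    have ht2 : t * t = ρ * (1 + t) := by
      rw [htdef]
      linear_combination hq2 / 4
    have htpos : 0 < t := by
      rw [htdef]
      have h1 : Real.sqrt (ρ * ρ) ≤ Real.sqrt ((4 + ρ) * ρ) := by
        apply Real.sqrt_le_sqrt
        nlinarith
      rw [Real.sqrt_mul_self hρnn] at h1
      linarith
    -- triangle inequality: √A2 ≤ √C2 + √D2
    set A := Real.sqrt A2 with hA
    set B := Real.sqrt B2 with hB
    set C := Real.sqrt C2 with hC
    set D := Real.sqrt D2 with hD
    clear_value A B C D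
    have hAsq : A^2 = A2 := by rw [hA]; exact Real.sq_sqrt hA2nn
    have hBsq : B^2 = B2 := by rw [hB]; exact Real.sq_sqrt hB2nn
    have hCsq : C^2 = C2 := by rw [hC]; exact Real.sq_sqrt hC2nn
    have hDsq : D^2 = D2 := by rw [hD]; exact Real.sq_sqrt hD2nn
    have hCnn : 0 ≤ C := by rw [hC]; exact Real.sqrt_nonneg _
    have hDnn : 0 ≤ D := by rw [hD]; exact Real.sqrt_nonneg _
    have htri : A ≤ C + D := by
      set m := ∑ i ∈ S \ T, (b i - a i) * (-(b i)) with hm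
      clear_value m
      have hCS : m^2 ≤ C2 * D2 := by
        rw [hm, hC2, hD2]
        have h := Finset.sum_mul_sq_le_sq_mul_sq (S \ T) (fun i => b i - a i) (fun i => -(b i))
        simpa using h
      have hA2exp : A2 = C2 + 2 * m + D2 := by
        rw [hA2, hC2, hD2, hm, Finset.mul_sum, ← Finset.sum_add_distrib,
          ← Finset.sum_add_distrib]
        exact Finset.sum_congr rfl (fun i _ => by ring)
      have hmid : m ≤ C * D := by
        have hCD : C * D = Real.sqrt (C2 * D2) := by
          rw [hC, hD]; exact (Real.sqrt_mul hC2nn _).symm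
        rw [hCD]
        calc m ≤ |m| := le_abs_self _
          _ = Real.sqrt (m^2) := (Real.sqrt_sq_eq_abs _).symm
          _ ≤ Real.sqrt (C2 * D2) := Real.sqrt_le_sqrt hCS
      have hsq : A2 ≤ (C + D)^2 := by
        have hexp : (C + D)^2 = C2 + 2*(C*D) + D2 := by rw [← hCsq, ← hDsq]; ring
        rw [hA2exp, hexp]
        linarith
      rw [hA]
      calc Real.sqrt A2 ≤ Real.sqrt ((C + D)^2) := Real.sqrt_le_sqrt hsq
        _ = C + D := Real.sqrt_sq (by linarith)
    -- apply the scalar lemma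
    have hkey : A2 ≤ t * B2 + (1 + t) * C2 := by
      have h := ht_scalar ρ t A B C D hρpos ht2 htpos (by rw [hA]; exact Real.sqrt_nonneg _)
        (by rw [hB]; exact Real.sqrt_nonneg _) (by rw [hC]; exact Real.sqrt_nonneg _)
        (by rw [hD]; exact Real.sqrt_nonneg _) htri
        (by rw [hDsq, hBsq]; exact hD2B2)
      rwa [hAsq, hBsq, hCsq] at h
    apply hfinish
    rw [hnorm1]
    have hstep1 : t * B2 ≤ t * X := mul_le_mul_of_nonneg_left hB2X htnn
    have hstep2 : (1 + t) * (X + C2) ≤ (1 + t) * ‖b - a‖^2 :=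
      mul_le_mul_of_nonneg_left hnorm2 (by linarith)
    calc X + A2 ≤ X + (t * B2 + (1 + t) * C2) := by linarith
      _ ≤ X + (t * X + (1 + t) * C2) := by linarith
      _ = (1 + t) * (X + C2) := by ring
      _ ≤ (1 + t) * ‖b - a‖^2 := hstep2

end
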